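/- The map sending a six-tuple (a_1, a_2, a_3, a_4, a_5, a_6) of nonnegative integers with a_2 ∈ {0,1} and a_5 ∈ {0,1} to the quadruple (a_1 + a_2/2, a_3 + a_2/2, a_4 + a_5/2, a_6 + a_5/2) of rational numbers is a bijection from the set of such six-tuples onto the monoid M. -/

import Mathlib

/-- The monoid `M` of quadruples `(u₃, u₂, u₁, u₀)` of nonnegative rationals with
`2u₃ ∈ ℤ`, `u₃ + u₂ ∈ ℤ`, `2(u₃ + u₂ + u₁) ∈ ℤ` and `u₃ + u₂ + u₁ + u₀ ∈ ℤ`. -/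
def Mset : Set (ℚ × ℚ × ℚ × ℚ) :=
  {u | 0 ≤ u.1 ∧ 0 ≤ u.2.1 ∧ 0 ≤ u.2.2.1 ∧ 0 ≤ u.2.2.2 ∧
    (∃ z : ℤ, 2 * u.1 = z) ∧
    (∃ z : ℤ, u.1 + u.2.1 = z) ∧
    (∃ z : ℤ, 2 * (u.1 + u.2.1 + u.2.2.1) = z) ∧
    (∃ z : ℤ, u.1 + u.2.1 + u.2.2.1 + u.2.2.2 = z)}

/-- the map sending a six-tuple `(a₁, …, a₆)` of nonnegative integers
with `a₂, a₅ ∈ {0, 1}` to `(a₁ + a₂/2, a₃ + a₂/2, a₄ + a₅/2, a₆ + a₅/2)` is a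
bijection from the set of such six-tuples onto `M`.
(The six-tuple is encoded as `a : Fin 6 → ℕ` with `a i` standing for `a_{i+1}`.) -/
theorem stmt_14 :
    Set.BijOn
      (fun a : Fin 6 → ℕ =>
        (((a 0 : ℚ) + (a 1 : ℚ) / 2, (a 2 : ℚ) + (a 1 : ℚ) / 2,
          (a 3 : ℚ) + (a 4 : ℚ) / 2, (a 5 : ℚ) + (a 4 : ℚ) / 2) : ℚ × ℚ × ℚ × ℚ))
      {a | a 1 ≤ 1 ∧ a 4 ≤ 1} Mset := by
  refine ⟨?_, ?_, ?_⟩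
  · intro a _
    refine ⟨by positivity, by positivity, by positivity, by positivity,
      ⟨2 * a 0 + a 1, by push_cast; ring⟩,
      ⟨a 0 + a 1 + a 2, by push_cast; ring⟩,
      ⟨2 * a 0 + 2 * a 1 + 2 * a 2 + 2 * a 3 + a 4, by push_cast; ring⟩,
      ⟨a 0 + a 1 + a 2 + a 3 + a 4 + a 5, by push_cast; ring⟩⟩
  · intro a ⟨ha1, ha4⟩ b ⟨hb1, hb4⟩ hab
    simp only [Prod.mk.injEq] at hab
    obtain ⟨e1, e2, e3, e4⟩ := hab
    have c1 : (2 * a 0 + a 1 : ℚ) = 2 * b 0 + b 1 := by linarith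
    have c2 : (2 * a 2 + a 1 : ℚ) = 2 * b 2 + b 1 := by linarith
    have c3 : (2 * a 3 + a 4 : ℚ) = 2 * b 3 + b 4 := by linarith
    have c4 : (2 * a 5 + a 4 : ℚ) = 2 * b 5 + b 4 := by linarith
    have d1 : 2 * a 0 + a 1 = 2 * b 0 + b 1 := by exact_mod_cast c1
    have d2 : 2 * a 2 + a 1 = 2 * b 2 + b 1 := by exact_mod_cast c2
    have d3 : 2 * a 3 + a 4 = 2 * b 3 + b 4 := by exact_mod_cast c3
    have d4 : 2 * a 5 + a 4 = 2 * b 5 + b 4 := by exact_mod_cast c4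
    have p0 : a 0 = b 0 := by omega
    have p1 : a 1 = b 1 := by omega
    have p2 : a 2 = b 2 := by omega
    have p3 : a 3 = b 3 := by omega
    have p4 : a 4 = b 4 := by omega
    have p5 : a 5 = b 5 := by omega
    funext i
    fin_cases i
    exacts [p0, p1, p2, p3, p4, p5]
  · rintro ⟨u3, u2, u1, u0⟩ ⟨h0, h1, h2, h3, ⟨n1, e1⟩, ⟨n2, e2⟩, ⟨n3, e3⟩, ⟨n4, e4⟩⟩
    simp only at *
    have g1 : 0 ≤ n1 := by
      have : (0:ℚ) ≤ (n1:ℚ) := by rw [← e1]; linarith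
      exact_mod_cast this
    have g2 : n1 ≤ 2 * n2 := by
      have : (n1:ℚ) ≤ 2 * n2 := by rw [← e1]; push_cast [← e2]; linarith
      exact_mod_cast this
    have g3 : 2 * n2 ≤ n3 := by
      have : (2 * n2 : ℚ) ≤ n3 := by rw [← e3]; push_cast [← e2]; linarith
      exact_mod_cast this
    have g4 : n3 ≤ 2 * n4 := by
      have : (n3:ℚ) ≤ 2 * n4 := by rw [← e3]; push_cast [← e4]; linarith
      exact_mod_cast this
    refine ⟨![(n1 / 2).toNat, (n1 % 2).toNat, (n2 - n1 / 2 - n1 % 2).toNat,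
      ((n3 - 2 * n2) / 2).toNat, ((n3 - 2 * n2) % 2).toNat,
      (n4 - n2 - (n3 - 2 * n2) / 2 - (n3 - 2 * n2) % 2).toNat], ⟨?_, ?_⟩, ?_⟩
    · show (n1 % 2).toNat ≤ 1; omega
    · show ((n3 - 2 * n2) % 2).toNat ≤ 1; omega
    · simp only [Matrix.cons_val_zero, Matrix.cons_val_one, Matrix.head_cons,
        Matrix.cons_val_two, Matrix.tail_cons, Matrix.cons_val_three,
        Matrix.cons_val_four, Matrix.cons_val_fin_one]
      have t1 : ((n1 / 2).toNat : ℚ) = (n1 / 2 : ℤ) := by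
        rw [← Int.cast_natCast, Int.toNat_of_nonneg (by omega)]
      have t2 : ((n1 % 2).toNat : ℚ) = (n1 % 2 : ℤ) := by
        rw [← Int.cast_natCast, Int.toNat_of_nonneg (by omega)]
      have t3 : ((n2 - n1 / 2 - n1 % 2).toNat : ℚ) = ((n2 - n1 / 2 - n1 % 2 : ℤ)) := by
        rw [← Int.cast_natCast, Int.toNat_of_nonneg (by omega)]
      have t4 : (((n3 - 2 * n2) / 2).toNat : ℚ) = ((n3 - 2 * n2) / 2 : ℤ) := by
        rw [← Int.cast_natCast, Int.toNat_of_nonneg (by omega)]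
      have t5 : (((n3 - 2 * n2) % 2).toNat : ℚ) = ((n3 - 2 * n2) % 2 : ℤ) := by
        rw [← Int.cast_natCast, Int.toNat_of_nonneg (by omega)]
      have t6 : ((n4 - n2 - (n3 - 2 * n2) / 2 - (n3 - 2 * n2) % 2).toNat : ℚ)
          = ((n4 - n2 - (n3 - 2 * n2) / 2 - (n3 - 2 * n2) % 2 : ℤ)) := by
        rw [← Int.cast_natCast, Int.toNat_of_nonneg (by omega)]
      have k1 : 2 * (n1 / 2) + n1 % 2 = n1 := by omega
      have k2 : 2 * ((n3 - 2 * n2) / 2) + (n3 - 2 * n2) % 2 = n3 - 2 * n2 := by omega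
      have k1q : (2 * (n1 / 2 : ℤ) + (n1 % 2 : ℤ) : ℚ) = n1 := by exact_mod_cast congrArg (Int.cast : ℤ → ℚ) k1
      have k2q : (2 * ((n3 - 2 * n2) / 2 : ℤ) + ((n3 - 2 * n2) % 2 : ℤ) : ℚ) = n3 - 2 * n2 := by
        exact_mod_cast congrArg (Int.cast : ℤ → ℚ) k2
      refine Prod.ext ?_ (Prod.ext ?_ (Prod.ext ?_ ?_))
      · show ((n1 / 2).toNat : ℚ) + ((n1 % 2).toNat : ℚ) / 2 = u3
        rw [t1, t2]; linarith [k1q, e1]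
      · show ((n2 - n1 / 2 - n1 % 2).toNat : ℚ) + ((n1 % 2).toNat : ℚ) / 2 = u2
        rw [t3, t2]; push_cast; linarith [k1q, e1, e2]
      · show (((n3 - 2 * n2) / 2).toNat : ℚ) + (((n3 - 2 * n2) % 2).toNat : ℚ) / 2 = u1
        rw [t4, t5]; linarith [k2q, e2, e3]
      · show ((n4 - n2 - (n3 - 2 * n2) / 2 - (n3 - 2 * n2) % 2).toNat : ℚ)
            + (((n3 - 2 * n2) % 2).toNat : ℚ) / 2 = u0
        rw [t6, t5]; push_cast; linarith [k2q, e3, e4]
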